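/- Let r ∈ ℤ_{≥2} and let P_k ∈ ℂ[t₂] be polynomials of degree ≤ r−2 for k ≥ 1. Set f(z,t₂) = t₂^r + ∑_{k≥1} P_k(t₂)z^k. If b₂ = ∑_{k≥0} b₂^{(k)}(t₂)z^k is a formal solution of −(z/2)∂₂³b₂ + (∂₂f)·b₂ + 2f·∂₂b₂ − z∂_z f + f = 0, then b₂^{(0)}(t₂) = −t₂/(r+2), b₂^{(k)} = 0 for all k ≥ 1, and P_k = 0 for all k ≥ 1. -/

import Mathlib

open Filter Polynomial Topology

private lemma analyticAt_deriv' {f : ℂ → ℂ} (h : AnalyticAt ℂ f 0) :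
    AnalyticAt ℂ (deriv f) 0 := by
  obtain ⟨s, hs, hf⟩ := h.eventually_analyticAt.exists_mem
  exact AnalyticOnNhd.deriv (fun x hx => hf x hx) 0 (mem_of_mem_nhds hs)

private lemma eq_at_zero_of_punctured {f g : ℂ → ℂ} (hf : ContinuousAt f 0)
    (hg : ContinuousAt g 0) (h : f =ᶠ[𝓝[≠] (0:ℂ)] g) : f 0 = g 0 := by
  have h1 : Tendsto f (𝓝[≠] (0:ℂ)) (𝓝 (f 0)) := hf.continuousWithinAt.tendsto
  have h2 : Tendsto f (𝓝[≠] (0:ℂ)) (𝓝 (g 0)) := hg.continuousWithinAt.tendsto.congr' h.symm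
  exact tendsto_nhds_unique h1 h2

private lemma pow_dvd_of_eventually : ∀ (k : ℕ) (Q : Polynomial ℂ) (h : ℂ → ℂ),
    ContinuousAt h 0 → (∀ᶠ t in 𝓝 (0:ℂ), Q.eval t = t ^ k * h t) →
    (X : Polynomial ℂ) ^ k ∣ Q := by
  intro k
  induction k with
  | zero => intro Q h _ _; simp
  | succ k ih =>
    intro Q h hc hev
    have h0 : Q.eval 0 = 0 := by simpa using hev.self_of_nhds
    have hX : (X : Polynomial ℂ) ∣ Q := X_dvd_iff.2 (by rwa [coeff_zero_eq_eval_zero])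
    obtain ⟨R, rfl⟩ := hX
    have hne : ∀ᶠ t in 𝓝 (0:ℂ), t ≠ 0 → R.eval t = t ^ k * h t := by
      filter_upwards [hev] with t ht hne
      apply mul_left_cancel₀ hne
      rw [← mul_assoc, ← pow_succ', ← ht, eval_mul, eval_X]
    have hzero : R.eval 0 = (0:ℂ) ^ k * h 0 := by
      apply eq_at_zero_of_punctured (f := fun t => R.eval t) (g := fun t => t ^ k * h t)
        R.continuous_aeval.continuousAt ((continuousAt_id.pow k).mul hc)
      have hmem : ∀ᶠ t in 𝓝[≠] (0:ℂ), t ≠ 0 := eventually_mem_nhdsWithin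
      filter_upwards [hne.filter_mono nhdsWithin_le_nhds, hmem] with t ht h' using ht h'
    have hev' : ∀ᶠ t in 𝓝 (0:ℂ), R.eval t = t ^ k * h t := by
      filter_upwards [hne] with t ht
      rcases eq_or_ne t 0 with rfl | h'
      · exact hzero
      · exact ht h'
    obtain ⟨S, rfl⟩ := ih R h hc hev'
    exact ⟨S, by ring⟩

private lemma key_ode (r : ℕ) (hr : 2 ≤ r) (y : ℂ → ℂ) (hy : AnalyticAt ℂ y 0)
    (Q : Polynomial ℂ) (hQ : Q.degree ≤ ((r - 2 : ℕ) : WithBot ℕ))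
    (heq : ∀ᶠ t in 𝓝 (0:ℂ), (r:ℂ) * t ^ (r-1) * y t + 2 * t ^ r * deriv y t = Q.eval t) :
    (∀ᶠ t in 𝓝 (0:ℂ), y t = 0) ∧ Q = 0 := by
  have hyd : AnalyticAt ℂ (deriv y) 0 := analyticAt_deriv' hy
  set h : ℂ → ℂ := fun t => (r:ℂ) * y t + 2 * t * deriv y t with hh_def
  have hh : AnalyticAt ℂ h 0 :=
    (analyticAt_const.mul hy).add ((analyticAt_const.mul analyticAt_id).mul hyd)
  have hpow : ∀ t : ℂ, t ^ (r-1) * t = t ^ r := by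
    intro t; rw [← pow_succ, Nat.sub_add_cancel (by omega)]
  have hev : ∀ᶠ t in 𝓝 (0:ℂ), Q.eval t = t ^ (r-1) * h t := by
    filter_upwards [heq] with t ht
    have h2 := hpow t
    rw [hh_def]
    linear_combination -ht - 2 * deriv y t * h2
  have hdvd := pow_dvd_of_eventually (r-1) Q h hh.continuousAt hev
  have hQ0 : Q = 0 := by
    refine Polynomial.eq_zero_of_dvd_of_degree_lt hdvd ?_
    rw [degree_X_pow]
    refine lt_of_le_of_lt hQ ?_
    exact_mod_cast (by omega : r - 2 < r - 1)
  refine ⟨?_, hQ0⟩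
  rw [hQ0] at hev
  have hpun : ∀ᶠ t in 𝓝 (0:ℂ), t ≠ 0 → h t = 0 := by
    filter_upwards [hev] with t ht hne
    have h1 : t ^ (r-1) ≠ 0 := pow_ne_zero _ hne
    field_simp at ht
    rw [eval_zero] at ht
    exact (mul_eq_zero.1 ht.symm).resolve_left h1
  have hya : ∀ᶠ t in 𝓝 (0:ℂ), AnalyticAt ℂ y t := hy.eventually_analyticAt
  set w : ℂ → ℂ := fun s => s ^ r * (y s * y s) with hw_def
  have hkey : ∀ᶠ t in 𝓝 (0:ℂ), deriv w t = 0 ∧ DifferentiableAt ℂ w t := by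
    filter_upwards [hpun, hya] with t ht hyt
    have hd : HasDerivAt y (deriv y t) t := hyt.differentiableAt.hasDerivAt
    have hw : HasDerivAt w (((r:ℕ):ℂ) * t ^ (r-1) * (y t * y t)
        + t ^ r * (deriv y t * y t + y t * deriv y t)) t :=
      (hasDerivAt_pow r t).mul (hd.mul hd)
    refine ⟨?_, hw.differentiableAt⟩
    rw [hw.deriv]
    rcases eq_or_ne t 0 with rfl | h'
    · simp [zero_pow (by omega : r - 1 ≠ 0), zero_pow (by omega : r ≠ 0)]
    · have h0 := ht h'
      rw [hh_def] at h0
      have h2 := hpow t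
      linear_combination (t^(r-1) * y t) * h0 - 2 * y t * deriv y t * h2
  obtain ⟨ε, hε, hball⟩ := Metric.mem_nhds_iff.1 hkey
  have w0 : w 0 = 0 := by simp [hw_def, zero_pow (by omega : r ≠ 0)]
  have wconst : ∀ x ∈ Metric.ball (0:ℂ) ε, w x = 0 := by
    intro x hx
    have hdiff : DifferentiableOn ℂ w (Metric.ball (0:ℂ) ε) :=
      fun z hz => ((hball hz).2).differentiableWithinAt
    have hf' : ∀ z ∈ Metric.ball (0:ℂ) ε, fderivWithin ℂ w (Metric.ball (0:ℂ) ε) z = 0 := by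
      intro z hz
      rw [fderivWithin_of_mem_nhds (Metric.isOpen_ball.mem_nhds hz)]
      have hdz : HasDerivAt w 0 z := (hball hz).1 ▸ ((hball hz).2).hasDerivAt
      rw [hdz.hasFDerivAt.fderiv]
      ext v
      simp
    have := (convex_ball (0:ℂ) ε).is_const_of_fderivWithin_eq_zero hdiff hf' hx
      (Metric.mem_ball_self hε)
    rw [this, w0]
  have hball_mem : Metric.ball (0:ℂ) ε ∈ 𝓝 (0:ℂ) := Metric.ball_mem_nhds 0 hε
  have hyne : ∀ᶠ t in 𝓝 (0:ℂ), t ≠ 0 → y t = 0 := by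
    filter_upwards [hball_mem] with t ht hne
    have hw0 : t ^ r * (y t * y t) = 0 := wconst t ht
    have : y t * y t = 0 := by
      rcases mul_eq_zero.1 hw0 with h1 | h1
      · exact absurd h1 (pow_ne_zero _ hne)
      · exact h1
    exact mul_self_eq_zero.1 this
  have hy0 : y 0 = 0 := by
    have := eq_at_zero_of_punctured (f := y) (g := fun _ => (0:ℂ)) hy.continuousAt
      continuousAt_const ?_
    · exact this
    · have hmem : ∀ᶠ t in 𝓝[≠] (0:ℂ), t ≠ 0 := eventually_mem_nhdsWithin
      filter_upwards [hyne.filter_mono nhdsWithin_le_nhds, hmem] with t ht h' using ht h'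
  filter_upwards [hyne] with t ht
  rcases eq_or_ne t 0 with rfl | h'
  · exact hy0
  · exact ht h'

private lemma third_deriv_zero {f g : ℂ → ℂ} (h : f =ᶠ[𝓝 (0:ℂ)] g)
    (hg : deriv (deriv (deriv g)) = fun _ => (0:ℂ)) :
    ∀ᶠ t in 𝓝 (0:ℂ), iteratedDeriv 3 f t = 0 := by
  have h3 := h.deriv.deriv.deriv
  rw [hg] at h3
  filter_upwards [h3] with t ht
  rw [show (3:ℕ) = 2 + 1 from rfl, iteratedDeriv_succ,
    show (2:ℕ) = 1 + 1 from rfl, iteratedDeriv_succ, iteratedDeriv_one]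
  exact ht

/-- Proposition `step-1` iv): let `r ≥ 2` and `P_k ∈ ℂ[t₂]` polynomials of degree
`≤ r−2` (for `k ≥ 1`), and set `f(z,t₂) = t₂^r + ∑_{k≥1} P_k(t₂) z^k`. If
`b₂ = ∑_k b₂^{(k)}(t₂) z^k` (with holomorphic coefficients on a common
neighbourhood `U` of `0`) solves
`−(z/2)∂₂³b₂ + (∂₂f)·b₂ + 2f·∂₂b₂ − z∂_z f + f = 0`
(coefficientwise in `z`, on `U`), then `b₂^{(0)}(t₂) = −t₂/(r+2)`, `b₂^{(k)} = 0`
for all `k ≥ 1`, and `P_k = 0` for all `k ≥ 1`. -/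
theorem stmt_16 (r : ℕ) (hr : 2 ≤ r) (P : ℕ → Polynomial ℂ)
    (hP : ∀ k, 1 ≤ k → (P k).degree ≤ (r - 2 : ℕ))
    (fc : ℕ → ℂ → ℂ)
    (hfc : fc = fun k t => if k = 0 then t ^ r else (P k).eval t)
    (b : ℕ → ℂ → ℂ) (U : Set ℂ) (hU : U ∈ nhds (0 : ℂ))
    (hb : ∀ k, AnalyticOnNhd ℂ (b k) U)
    (heq : ∀ n : ℕ, ∀ t ∈ U,
      (if n = 0 then 0 else -(1 / 2 : ℂ) * iteratedDeriv 3 (b (n - 1)) t)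
        + (∑ p ∈ Finset.HasAntidiagonal.antidiagonal n, deriv (fc p.1) t * b p.2 t)
        + 2 * (∑ p ∈ Finset.HasAntidiagonal.antidiagonal n, fc p.1 t * deriv (b p.2) t)
        + (1 - (n : ℂ)) * fc n t = 0) :
    (∀ᶠ t in nhds (0 : ℂ), b 0 t = -t / ((r : ℂ) + 2)) ∧
    (∀ k, 1 ≤ k → ∀ᶠ t in nhds (0 : ℂ), b k t = 0) ∧
    (∀ k, 1 ≤ k → P k = 0) := by
  have h0U : (0:ℂ) ∈ U := mem_of_mem_nhds hU
  have hfc0 : fc 0 = fun t : ℂ => t ^ r := by rw [hfc]; simp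
  have hfck : ∀ k : ℕ, k ≠ 0 → fc k = fun t : ℂ => (P k).eval t := by
    intro k hk; rw [hfc]; simp [hk]
  set c : ℂ := (r:ℂ) + 2 with hc_def
  have hcne : c ≠ 0 := by
    have h2 : ((r + 2 : ℕ) : ℂ) ≠ 0 := Nat.cast_ne_zero.2 (by omega)
    rw [hc_def]; push_cast at h2 ⊢; exact h2
  have hpow : ∀ t : ℂ, t ^ (r-1) * t = t ^ r := by
    intro t; rw [← pow_succ, Nat.sub_add_cancel (by omega)]
  -- the order-0 equation
  have heq0 : ∀ t ∈ U,
      (r:ℂ) * t ^ (r-1) * b 0 t + 2 * (t ^ r * deriv (b 0) t) + t ^ r = 0 := by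
    intro t ht
    have E := heq 0 t ht
    simp only [if_pos rfl, if_true, Finset.Nat.antidiagonal_zero, Finset.sum_singleton, hfc0,
      deriv_pow_field, Nat.cast_zero] at E
    linear_combination E
  -- step 0 : b 0 = -t/c near 0
  have hb0 : ∀ᶠ t in 𝓝 (0:ℂ), b 0 t = -t / c := by
    have hY : AnalyticAt ℂ (fun t => c * b 0 t + t) 0 :=
      (analyticAt_const.mul (hb 0 0 h0U)).add analyticAt_id
    have hevY : ∀ᶠ t in 𝓝 (0:ℂ), (r:ℂ) * t ^ (r-1) * (c * b 0 t + t)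
        + 2 * t ^ r * deriv (fun s => c * b 0 s + s) t = (0 : Polynomial ℂ).eval t := by
      filter_upwards [hU] with t ht
      have hd : HasDerivAt (fun s => c * b 0 s + s) (c * deriv (b 0) t + 1) t :=
        (((hb 0 t ht).differentiableAt.hasDerivAt).const_mul c).add (hasDerivAt_id t)
      rw [hd.deriv, eval_zero]
      have E := heq0 t ht
      have h2 := hpow t
      rw [hc_def]
      linear_combination ((r:ℂ)+2) * E + (r:ℂ) * h2
    obtain ⟨hY0, -⟩ := key_ode r hr _ hY 0 (by simp) hevY
    filter_upwards [hY0] with t ht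
    field_simp
    linear_combination ht
  have hb0' : b 0 =ᶠ[𝓝 (0:ℂ)] fun t => -t / c := hb0
  have hDlin : ∀ t : ℂ, HasDerivAt (fun s : ℂ => -s / c) (-(1/c)) t := by
    intro t
    simpa [neg_div] using ((hasDerivAt_id t).neg.div_const c)
  have hd0ev : ∀ᶠ t in 𝓝 (0:ℂ), deriv (b 0) t = -(1/c) := by
    filter_upwards [hb0'.deriv] with t ht
    rw [ht, (hDlin t).deriv]
  have hg1 : deriv (deriv (deriv (fun s : ℂ => -s / c))) = fun _ => (0:ℂ) := by
    have e1 : deriv (fun s : ℂ => -s / c) = fun _ => -(1/c) := funext fun t => (hDlin t).deriv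
    rw [e1]
    simp
  have main : ∀ n : ℕ, 1 ≤ n → (∀ᶠ t in 𝓝 (0:ℂ), b n t = 0) ∧ P n = 0 := by
    intro n
    induction n using Nat.strong_induction_on with
    | _ n ih =>
    intro hn
    have hthird : ∀ᶠ t in 𝓝 (0:ℂ), iteratedDeriv 3 (b (n-1)) t = 0 := by
      rcases eq_or_lt_of_le hn with h1 | h2
      · have hh : n - 1 = 0 := by omega
        rw [hh]
        exact third_deriv_zero hb0' hg1
      · have := (ih (n-1) (by omega) (by omega)).1
        exact third_deriv_zero this (by funext t; simp)
    have hmidP : ∀ i : ℕ, i ≠ 0 → i ≠ n → i < n + 1 → fc i = fun _ : ℂ => (0:ℂ) := by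
      intro i h0 hn' hlt
      rw [hfck i h0, (ih i (by omega) (by omega)).2]
      funext t; simp
    have hsub : ({0, n} : Finset ℕ) ⊆ Finset.range (n+1) := by
      intro x hx
      simp only [Finset.mem_insert, Finset.mem_singleton] at hx
      rcases hx with rfl | rfl <;> simp [Finset.mem_range] <;> omega
    have hsum1 : ∀ t : ℂ, (∑ p ∈ Finset.HasAntidiagonal.antidiagonal n, deriv (fc p.1) t * b p.2 t)
        = (r:ℂ) * t ^ (r-1) * b n t + (derivative (P n)).eval t * b 0 t := by
      intro t
      rw [Finset.Nat.sum_antidiagonal_eq_sum_range_succ_mk]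
      rw [← Finset.sum_subset hsub (fun x hx hx' => ?_)]
      · rw [Finset.sum_pair (by omega : (0:ℕ) ≠ n)]
        simp only [hfc0, hfck n (by omega : n ≠ 0), Nat.sub_zero, Nat.sub_self,
          deriv_pow_field, Polynomial.deriv]
      · simp only [Finset.mem_insert, Finset.mem_singleton, not_or] at hx'
        rw [hmidP x hx'.1 hx'.2 (Finset.mem_range.1 hx)]
        simp
    have hsum2 : ∀ t : ℂ, (∑ p ∈ Finset.HasAntidiagonal.antidiagonal n, fc p.1 t * deriv (b p.2) t)
        = t ^ r * deriv (b n) t + (P n).eval t * deriv (b 0) t := by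
      intro t
      rw [Finset.Nat.sum_antidiagonal_eq_sum_range_succ_mk]
      rw [← Finset.sum_subset hsub (fun x hx hx' => ?_)]
      · rw [Finset.sum_pair (by omega : (0:ℕ) ≠ n)]
        simp only [hfc0, hfck n (by omega : n ≠ 0), Nat.sub_zero, Nat.sub_self]
      · simp only [Finset.mem_insert, Finset.mem_singleton, not_or] at hx'
        rw [hmidP x hx'.1 hx'.2 (Finset.mem_range.1 hx)]
        simp
    set Q : Polynomial ℂ := C c⁻¹ * (X * derivative (P n)) + C (2/c + ((n:ℂ) - 1)) * P n
      with hQ_def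
    have hcoeffQ : ∀ m : ℕ, Q.coeff (m+1) =
        c⁻¹ * ((P n).coeff (m+1) * ((m:ℂ)+1)) + (2/c + ((n:ℂ)-1)) * (P n).coeff (m+1) := by
      intro m
      rw [hQ_def]
      simp only [coeff_add, coeff_C_mul, coeff_X_mul, coeff_derivative]
    have hcoeffQ0 : Q.coeff 0 = (2/c + ((n:ℂ)-1)) * (P n).coeff 0 := by
      rw [hQ_def]
      simp only [coeff_add, coeff_C_mul, mul_coeff_zero, coeff_X_zero, zero_mul, mul_zero,
        zero_add, coeff_C_zero]
    have hQdeg : Q.degree ≤ ((r-2:ℕ) : WithBot ℕ) := by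
      rw [degree_le_iff_coeff_zero]
      intro m hm
      have hm' : (r - 2 : ℕ) < m := by exact_mod_cast hm
      rcases m with _ | m'
      · omega
      · have hz : (P n).coeff (m'+1) = 0 := by
          refine coeff_eq_zero_of_degree_lt (lt_of_le_of_lt (hP n hn) ?_)
          exact_mod_cast hm'
        rw [hcoeffQ m', hz]
        ring
    have hfinal : ∀ᶠ t in 𝓝 (0:ℂ), (r:ℂ) * t ^ (r-1) * b n t + 2 * t ^ r * deriv (b n) t
        = Q.eval t := by
      filter_upwards [hU, hb0, hd0ev, hthird] with t htU hb0t hd0t h3t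
      have E := heq n t htU
      rw [if_neg (by omega : ¬ n = 0), hsum1 t, hsum2 t] at E
      simp only [hfck n (by omega : n ≠ 0)] at E
      rw [h3t, hb0t, hd0t] at E
      rw [hQ_def]
      simp only [eval_add, eval_mul, eval_C, eval_X]
      have h2 := hpow t
      field_simp at E ⊢
      rw [hc_def] at E
      linear_combination (1/2 : ℂ) * E
    obtain ⟨hbn, hQ0⟩ := key_ode r hr (b n) (hb n 0 h0U) Q hQdeg hfinal
    refine ⟨hbn, ?_⟩
    have hPcoeff : ∀ m : ℕ, (((m:ℂ) + 2) / c + ((n:ℂ) - 1)) * (P n).coeff m = 0 := by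
      intro m
      rcases m with _ | m'
      · have h0 := congrArg (fun q : Polynomial ℂ => q.coeff 0) hQ0
        simp only [coeff_zero] at h0
        rw [hcoeffQ0] at h0
        simp only [Nat.cast_zero]
        linear_combination h0
      · have h0 := congrArg (fun q : Polynomial ℂ => q.coeff (m'+1)) hQ0
        simp only [coeff_zero] at h0
        rw [hcoeffQ m'] at h0
        push_cast
        linear_combination h0
    apply Polynomial.ext
    intro m
    rw [coeff_zero]
    have hsc : ((m:ℂ) + 2) / c + ((n:ℂ) - 1) ≠ 0 := by
      have hnum : ((m + 2 + (n-1)*(r+2) : ℕ) : ℂ) ≠ 0 := Nat.cast_ne_zero.2 (by omega)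
      have heqs : ((m:ℂ)+2)/c + ((n:ℂ)-1) = ((m + 2 + (n-1)*(r+2) : ℕ) : ℂ) / c := by
        rw [hc_def]
        push_cast [Nat.cast_sub hn]
        field_simp
        rw [div_add' _ _ _ hcne]
        ring
      rw [heqs]
      exact div_ne_zero hnum hcne
    exact (mul_eq_zero.1 (hPcoeff m)).resolve_left hsc
  exact ⟨hb0, fun k hk => (main k hk).1, fun k hk => (main k hk).2⟩
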